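/- Let (M₁,≤₁),…,(M_t,≤_t) be cancellative ordered monoids and equip ∏ M_i with the lexicographic order. Let N be a monoid with maps g_i : N → M_i satisfying g_i(1) = 1, such that g = (g₁,…,g_t) : N → ∏ M_i is injective, and suppose there are maps h_i : (∏_{j<i} M_j)² → M_i (with h₁ constant equal to 1) such that g_i(wu) = h_i(g₁(w),…,g_{i-1}(w), g₁(u),…,g_{i-1}(u)) · g_i(w) · g_i(u) for all w, u ∈ N and all i. Then the order on N defined by w ≤_g w' iff g(w) ≤_lex g(w') makes (N, ≤_g) an ordered monoid. -/

import Mathlib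

/-- Lemma 2.3 ("Lemma g"): given cancellative ordered monoids `M i` (`i : Fin t`),
a monoid `N`, maps `g i : N → M i` with `g i 1 = 1` which are jointly injective,
and "twisting" maps `h i` depending only on the coordinates `j < i` with `h 0`
constantly `1`, satisfying
`g i (w * u) = h i (g · w) (g · u) * g i w * g i u`,
the pullback of the lexicographic order along `g` makes `N` an ordered monoid:
the identity is minimal and multiplication is order-preserving in both arguments
(the order being total, antisymmetric and transitive). -/
theorem stmt_1 {t : ℕ} (ht : 1 ≤ t) {M : Fin t → Type*}
    [∀ i, Monoid (M i)] [∀ i, LinearOrder (M i)]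
    (hone : ∀ i, ∀ a : M i, 1 ≤ a)
    (hmul : ∀ i, ∀ a b c d : M i, a ≤ b → c ≤ d → a * c ≤ b * d)
    (hlcancel : ∀ i, ∀ a b c : M i, a * b = a * c → b = c)
    (hrcancel : ∀ i, ∀ a b c : M i, b * a = c * a → b = c)
    {N : Type*} [Monoid N]
    (g : ∀ i, N → M i)
    (hgone : ∀ i, g i 1 = 1)
    (hginj : Function.Injective (fun w : N => fun i => g i w))
    (h : ∀ i : Fin t, (∀ j : Fin t, M j) → (∀ j : Fin t, M j) → M i)
    (hdep : ∀ i : Fin t, ∀ a a' b b' : ∀ j, M j,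
      (∀ j, j < i → a j = a' j ∧ b j = b' j) → h i a b = h i a' b')
    (h0 : ∀ a b, h ⟨0, ht⟩ a b = 1)
    (hcompat : ∀ i : Fin t, ∀ w u : N,
      g i (w * u) = h i (fun j => g j w) (fun j => g j u) * g i w * g i u)
    (le : N → N → Prop)
    (hle : ∀ w w', le w w' ↔
      toLex (fun i => g i w) ≤ toLex (fun i => g i w')) :
    (∀ w, le 1 w) ∧
    (∀ w w', le w w' ∨ le w' w) ∧
    (∀ w w', le w w' → le w' w → w = w') ∧
    (∀ w w' w'', le w w' → le w' w'' → le w w'') ∧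
    (∀ w w' u u', le w w' → le u u' → le (w * u) (w' * u')) := by
  refine ⟨?_, ?_, ?_, ?_, ?_⟩
  · intro w
    rw [hle]
    exact Pi.toLex_monotone (ι := Fin t) (β := M)
      (fun i => by simp only [hgone]; exact hone i _)
  · intro w w'
    rw [hle, hle]
    have tri := (@Pi.isTrichotomous_lex (Fin t) M (· < ·)
      (fun {i} => (· < ·)) (fun i => inferInstance) (wellFounded_lt)).trichotomous
      (fun i => g i w) (fun i => g i w')
    by_cases h1 : toLex (fun i => g i w) < toLex (fun i => g i w')
    · exact Or.inl (le_of_lt h1)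
    by_cases h2 : toLex (fun i => g i w') < toLex (fun i => g i w)
    · exact Or.inr (le_of_lt h2)
    · exact Or.inl (le_of_eq (congrArg toLex (tri h1 h2)))
  · intro w w' h1 h2
    rw [hle] at h1 h2
    exact hginj (toLex.injective (le_antisymm h1 h2))
  · intro w w' w'' h1 h2
    rw [hle] at h1 h2 ⊢
    exact le_trans h1 h2
  · intro w w' u u' hw hu
    rw [hle] at hw hu ⊢
    have key : (toLex (fun i => g i w) < toLex (fun i => g i w') ∨
        toLex (fun i => g i u) < toLex (fun i => g i u')) →
        toLex (fun i => g i (w * u)) ≤ toLex (fun i => g i (w' * u')) := by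
      intro hstrict
      -- the set of indices where some coordinate disagrees
      have hSne : {i : Fin t | g i w ≠ g i w' ∨ g i u ≠ g i u'}.Nonempty := by
        rcases hstrict with ⟨k, _, hk⟩ | ⟨k, _, hk⟩
        · exact ⟨k, Or.inl hk.ne⟩
        · exact ⟨k, Or.inr hk.ne⟩
      have hwf : WellFounded ((· < ·) : Fin t → Fin t → Prop) :=
        (inferInstance : WellFoundedLT (Fin t)).wf
      set i := hwf.min _ hSne with hi
      have hmem : g i w ≠ g i w' ∨ g i u ≠ g i u' :=
        hwf.min_mem _ hSne
      have hbelow : ∀ j, j < i → g j w = g j w' ∧ g j u = g j u' := by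
        intro j hj
        have := hwf.not_lt_min {i : Fin t | g i w ≠ g i w' ∨ g i u ≠ g i u'} (x := j)
        by_contra hcon
        exact this (by
          rw [Set.mem_setOf_eq]
          rcases not_and_or.mp hcon with hc | hc
          · exact Or.inl hc
          · exact Or.inr hc) hj
      -- coordinatewise inequalities at i
      have hwle : g i w ≤ g i w' := by
        rcases eq_or_lt_of_le hw with heq | ⟨k, hk1, hk2⟩
        · exact (congrFun (toLex.injective heq) i).le
        · rcases lt_trichotomy i k with hik | rfl | hik
          · exact (hk1 i hik).le
          · exact hk2.le
          · exact ((hwf.not_lt_min {i : Fin t | g i w ≠ g i w' ∨ g i u ≠ g i u'} (Or.inl hk2.ne) hik)).elim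
      have hule : g i u ≤ g i u' := by
        rcases eq_or_lt_of_le hu with heq | ⟨k, hk1, hk2⟩
        · exact (congrFun (toLex.injective heq) i).le
        · rcases lt_trichotomy i k with hik | rfl | hik
          · exact (hk1 i hik).le
          · exact hk2.le
          · exact ((hwf.not_lt_min {i : Fin t | g i w ≠ g i w' ∨ g i u ≠ g i u'} (Or.inr hk2.ne) hik)).elim
      -- strictness of the product at i
      have hprod : g i w * g i u < g i w' * g i u' := by
        refine lt_of_le_of_ne (hmul i _ _ _ _ hwle hule) ?_
        intro heq
        have h1 : g i w * g i u ≤ g i w * g i u' := hmul i _ _ _ _ le_rfl hule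
        have h2 : g i w * g i u' ≤ g i w' * g i u' := hmul i _ _ _ _ hwle le_rfl
        have h3 : g i w * g i u' = g i w' * g i u' :=
          le_antisymm h2 (heq ▸ h1)
        have h4 : g i w * g i u = g i w * g i u' := by
          rw [h3, heq]
        rcases hmem with hne | hne
        · exact hne (hrcancel i _ _ _ h3)
        · exact hne (hlcancel i _ _ _ h4)
      -- equality of the twisting terms below and at i
      have hH : ∀ j : Fin t, j ≤ i →
          h j (fun k => g k w) (fun k => g k u) =
          h j (fun k => g k w') (fun k => g k u') := by
        intro j hj
        exact hdep j _ _ _ _ (fun k hk => hbelow k (lt_of_lt_of_le hk hj))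
      refine le_of_lt ⟨i, ?_, ?_⟩
      · intro j hj
        show g j (w * u) = g j (w' * u')
        rw [hcompat j w u, hcompat j w' u', hH j hj.le,
          (hbelow j hj).1, (hbelow j hj).2]
      · show g i (w * u) < g i (w' * u')
        rw [hcompat i w u, hcompat i w' u', hH i le_rfl, mul_assoc, mul_assoc]
        refine lt_of_le_of_ne (hmul i _ _ _ _ le_rfl hprod.le) ?_
        intro heq
        exact hprod.ne (hlcancel i _ _ _ heq)
    rcases eq_or_lt_of_le hw with hweq | hwlt
    · rcases eq_or_lt_of_le hu with hueq | hult
      · rw [hginj (toLex.injective hweq), hginj (toLex.injective hueq)]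
      · exact key (Or.inr hult)
    · exact key (Or.inl hwlt)
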